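/- arXiv:math/0202042 — 3 statements merged into one kernel-verified Lean document; each statement's English description precedes it below -/
import Mathlib

section
/- For pointed sets K and L and a commutative monoid A, there is a natural isomorphism of commutative monoids SP(K ∧ L, A) ≅ SP(K, SP(L, A)), where K ∧ L denotes the smash product of pointed sets. -/
/-- The generating relations for McCord's construction `SP(K,A)`:
(i) `*^a = 1`, (ii) `k^0 = 1`, (iii) `k^{a₁} k^{a₂} = k^{a₁+a₂}`,
imposed on the free commutative monoid `(K × A) →₀ ℕ` on the symbols `k^a`. -/
def SPRel (K A : Type*) [Inhabited K] [AddCommMonoid A] :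
    ((K × A) →₀ ℕ) → ((K × A) →₀ ℕ) → Prop := fun x y =>
  (∃ a : A, x = Finsupp.single (default, a) 1 ∧ y = 0) ∨
  (∃ k : K, x = Finsupp.single (k, (0 : A)) 1 ∧ y = 0) ∨
  (∃ (k : K) (a₁ a₂ : A),
      x = Finsupp.single (k, a₁) 1 + Finsupp.single (k, a₂) 1 ∧
      y = Finsupp.single (k, a₁ + a₂) 1)

/-- McCord's `SP(K,A)`: the commutative monoid presented by generators `k^a`
(`k ∈ K`, `a ∈ A`) and relations `*^a = 1`, `k^0 = 1`, `k^{a₁}k^{a₂} = k^{a₁+a₂}`. -/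
abbrev SP (K A : Type*) [Inhabited K] [AddCommMonoid A] :=
  (addConGen (SPRel K A)).Quotient

/-- The generator `k^a` of `SP(K,A)`. -/
noncomputable def SPgen (K A : Type*) [Inhabited K] [AddCommMonoid A] (k : K) (a : A) : SP K A :=
  (addConGen (SPRel K A)).mk' (Finsupp.single (k, a) 1)

/-- The relation collapsing the wedge `K ∨ L ⊆ K × L` to a point. -/
def SmashRel (K L : Type*) [Inhabited K] [Inhabited L] : K × L → K × L → Prop :=
  fun p q => (p.1 = default ∨ p.2 = default) ∧ (q.1 = default ∨ q.2 = default)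

/-- The smash product of pointed sets: the quotient of `K × L` collapsing `K ∨ L`. -/
def Smash (K L : Type*) [Inhabited K] [Inhabited L] := Quot (SmashRel K L)

instance (K L : Type*) [Inhabited K] [Inhabited L] : Inhabited (Smash K L) :=
  ⟨Quot.mk _ (default, default)⟩

section lemmas
variable (K A : Type*) [Inhabited K] [AddCommMonoid A]

lemma SPgen_default (a : A) : SPgen K A default a = 0 := by
  rw [show (0 : SP K A) = (addConGen (SPRel K A)).mk' 0 from (map_zero _).symm]
  exact (AddCon.eq _).mpr (AddConGen.Rel.of _ _ (Or.inl ⟨a, rfl, rfl⟩))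

lemma SPgen_zero (k : K) : SPgen K A k 0 = 0 := by
  rw [show (0 : SP K A) = (addConGen (SPRel K A)).mk' 0 from (map_zero _).symm]
  exact (AddCon.eq _).mpr (AddConGen.Rel.of _ _ (Or.inr (Or.inl ⟨k, rfl, rfl⟩)))

lemma SPgen_add (k : K) (a₁ a₂ : A) :
    SPgen K A k a₁ + SPgen K A k a₂ = SPgen K A k (a₁ + a₂) := by
  rw [show SPgen K A k a₁ + SPgen K A k a₂ =
      (addConGen (SPRel K A)).mk' (Finsupp.single (k, a₁) 1 + Finsupp.single (k, a₂) 1) from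
    (map_add _ _ _).symm]
  exact (AddCon.eq _).mpr (AddConGen.Rel.of _ _ (Or.inr (Or.inr ⟨k, a₁, a₂, rfl, rfl⟩)))

variable {K A} {M : Type*} [AddCommMonoid M]

noncomputable def SPpre (f : K → A → M) : ((K × A) →₀ ℕ) →+ M :=
  Finsupp.liftAddHom (fun p => multiplesHom M (f p.1 p.2))

lemma SPpre_single (f : K → A → M) (k : K) (a : A) :
    SPpre f (Finsupp.single (k, a) 1) = f k a := by
  rw [SPpre, Finsupp.liftAddHom_apply_single]
  simp

noncomputable def SPlift (f : K → A → M) (h1 : ∀ a, f default a = 0)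
    (h2 : ∀ k, f k 0 = 0) (h3 : ∀ k a₁ a₂, f k a₁ + f k a₂ = f k (a₁ + a₂)) :
    SP K A →+ M :=
  AddCon.lift _ (SPpre f) (by
    refine AddCon.addConGen_le.mpr fun x y hxy => ?_
    rcases hxy with ⟨a, rfl, rfl⟩ | ⟨k, rfl, rfl⟩ | ⟨k, a₁, a₂, rfl, rfl⟩
    · show SPpre f _ = SPpre f 0
      rw [SPpre_single, h1, map_zero]
    · show SPpre f _ = SPpre f 0
      rw [SPpre_single, h2, map_zero]
    · show SPpre f _ = SPpre f _
      rw [map_add, SPpre_single, SPpre_single, SPpre_single, h3])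

lemma SPlift_gen (f : K → A → M) (h1 h2 h3) (k : K) (a : A) :
    SPlift f h1 h2 h3 (SPgen K A k a) = f k a := by
  show SPlift f h1 h2 h3 ((addConGen (SPRel K A)).mk' _) = _
  rw [SPlift, AddCon.lift_mk', SPpre_single]

lemma SP_hom_ext {φ ψ : SP K A →+ M}
    (h : ∀ k a, φ (SPgen K A k a) = ψ (SPgen K A k a)) : φ = ψ := by
  have key : φ.comp (addConGen (SPRel K A)).mk' = ψ.comp (addConGen (SPRel K A)).mk' := by
    refine Finsupp.addHom_ext fun p n => ?_
    obtain ⟨k, a⟩ := p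
    induction n with
    | zero => simp
    | succ m ih =>
      rw [show (m + 1 : ℕ) = m + 1 from rfl, Finsupp.single_add, map_add, map_add, ih]
      exact congrArg _ (h k a)
  refine AddMonoidHom.ext fun x => ?_
  obtain ⟨y, rfl⟩ := AddCon.mk'_surjective x
  exact DFunLike.congr_fun key y
end lemmas

section main
variable (K L A : Type*) [Inhabited K] [Inhabited L] [AddCommMonoid A]

lemma Smash.mk_default_left (l : L) :
    (Quot.mk _ (default, l) : Smash K L) = (default : Smash K L) :=
  Quot.sound ⟨Or.inl rfl, Or.inl rfl⟩

lemma Smash.mk_default_right (k : K) :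
    (Quot.mk _ (k, default) : Smash K L) = (default : Smash K L) :=
  Quot.sound ⟨Or.inr rfl, Or.inl rfl⟩

/-- The generator-level map `(k ∧ l)^a ↦ k^{l^a}` on the smash product. -/
noncomputable def fFwd : Smash K L → A → SP K (SP L A) := fun s a =>
  Quot.lift (fun p : K × L => SPgen K (SP L A) p.1 (SPgen L A p.2 a))
    (by
      rintro ⟨k₁, l₁⟩ ⟨k₂, l₂⟩ ⟨h₁, h₂⟩
      have z : ∀ (k : K) (l : L), (k = default ∨ l = default) →
          SPgen K (SP L A) k (SPgen L A l a) = 0 := by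
        rintro k l (rfl | rfl)
        · exact SPgen_default _ _ _
        · rw [SPgen_default, SPgen_zero]
      dsimp only
      rw [z k₁ l₁ h₁, z k₂ l₂ h₂]) s

noncomputable def Fwd : SP (Smash K L) A →+ SP K (SP L A) :=
  SPlift (fFwd K L A)
    (fun a => by
      show fFwd K L A (Quot.mk _ (default, default)) a = 0
      show SPgen K (SP L A) default (SPgen L A default a) = 0
      exact SPgen_default _ _ _)
    (fun s => by
      induction s using Quot.ind with
      | _ p =>
        show SPgen K (SP L A) p.1 (SPgen L A p.2 0) = 0
        rw [SPgen_zero, SPgen_zero])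
    (fun s a₁ a₂ => by
      induction s using Quot.ind with
      | _ p =>
        show SPgen K (SP L A) p.1 (SPgen L A p.2 a₁) + SPgen K (SP L A) p.1 (SPgen L A p.2 a₂)
          = SPgen K (SP L A) p.1 (SPgen L A p.2 (a₁ + a₂))
        rw [SPgen_add, SPgen_add])

/-- For fixed `k : K`, the hom `SP L A →+ SP (K ∧ L) A`, `l^a ↦ (k ∧ l)^a`. -/
noncomputable def gk (k : K) : SP L A →+ SP (Smash K L) A :=
  SPlift (fun (l : L) (a : A) => SPgen (Smash K L) A (Quot.mk _ (k, l)) a)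
    (fun a => by
      show SPgen (Smash K L) A (Quot.mk _ (k, default)) a = 0
      rw [Smash.mk_default_right, SPgen_default])
    (fun l => SPgen_zero _ _ _)
    (fun l a₁ a₂ => SPgen_add _ _ _ _ _)

lemma gk_gen (k : K) (l : L) (a : A) :
    gk K L A k (SPgen L A l a) = SPgen (Smash K L) A (Quot.mk _ (k, l)) a :=
  SPlift_gen _ _ _ _ _ _

noncomputable def Bwd : SP K (SP L A) →+ SP (Smash K L) A :=
  SPlift (fun k x => gk K L A k x)
    (fun x => by
      have h : gk K L A (default : K) = 0 := by
        refine SP_hom_ext fun l a => ?_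
        rw [gk_gen, Smash.mk_default_left, SPgen_default, AddMonoidHom.zero_apply]
      show gk K L A default x = 0
      rw [h, AddMonoidHom.zero_apply])
    (fun k => map_zero _)
    (fun k x₁ x₂ => (map_add _ _ _).symm)

theorem SP_smash_iso' :
    ∃ e : SP (Smash K L) A ≃+ SP K (SP L A),
      ∀ (k : K) (l : L) (a : A),
        e (SPgen (Smash K L) A (Quot.mk _ (k, l)) a) =
          SPgen K (SP L A) k (SPgen L A l a) := by
  have hFwd : ∀ (k : K) (l : L) (a : A),
      Fwd K L A (SPgen (Smash K L) A (Quot.mk _ (k, l)) a) =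
        SPgen K (SP L A) k (SPgen L A l a) := fun k l a => SPlift_gen _ _ _ _ _ _
  have hBwd : ∀ (k : K) (x : SP L A),
      Bwd K L A (SPgen K (SP L A) k x) = gk K L A k x := fun k x => SPlift_gen _ _ _ _ _ _
  have h1 : (Bwd K L A).comp (Fwd K L A) = AddMonoidHom.id _ := by
    refine SP_hom_ext fun s a => ?_
    induction s using Quot.ind with
    | _ p =>
      simp only [AddMonoidHom.comp_apply, AddMonoidHom.id_apply]
      rw [show (Quot.mk (SmashRel K L) p) = Quot.mk _ (p.1, p.2) from rfl, hFwd, hBwd, gk_gen]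
  have h2 : (Fwd K L A).comp (Bwd K L A) = AddMonoidHom.id _ := by
    refine SP_hom_ext fun k x => ?_
    simp only [AddMonoidHom.comp_apply, AddMonoidHom.id_apply]
    rw [hBwd]
    have key : (Fwd K L A).comp (gk K L A k) =
        { toFun := fun x => SPgen K (SP L A) k x,
          map_zero' := SPgen_zero _ _ _,
          map_add' := fun a b => (SPgen_add _ _ _ a b).symm } := by
      refine SP_hom_ext fun l a => ?_
      simp only [AddMonoidHom.comp_apply, AddMonoidHom.coe_mk, ZeroHom.coe_mk]
      rw [gk_gen, hFwd]
    exact DFunLike.congr_fun key x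
  exact ⟨AddMonoidHom.toAddEquiv (Fwd K L A) (Bwd K L A) h1 h2, hFwd⟩
end main

/-- McCord: there is a natural isomorphism of commutative monoids
`SP(K ∧ L, A) ≅ SP(K, SP(L, A))`, sending the generator `(k ∧ l)^a` to `k^{l^a}`. -/
theorem SP_smash_iso (K L A : Type*) [Inhabited K] [Inhabited L] [AddCommMonoid A] :
    ∃ e : SP (Smash K L) A ≃+ SP K (SP L A),
      ∀ (k : K) (l : L) (a : A),
        e (SPgen (Smash K L) A (Quot.mk _ (k, l)) a) =
          SPgen K (SP L A) k (SPgen L A l a) := by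
  exact SP_smash_iso' K L A
end

section
/- The assignment A ↦ A^× is a fully faithful functor from commutative monoids to functors Γ → Set: for commutative monoids A and B, natural transformations A^× → B^× correspond bijectively to monoid homomorphisms A → B. -/
/-- The map `Aⁿ → Aᵐ` induced by a based map `α : 𝐧 → 𝐦` of finite pointed sets
(`𝐧 = {0,1,…,n}` with basepoint `0`, modelled so that `Aⁿ` is indexed by `Fin n`,
with `j : Fin n` corresponding to the element `j+1` of `𝐧`): the `i`-th component
of the image of `x` is the sum of the `x j` over all `j` with `α (j+1) = i+1`,
the empty sum being `0`. -/
def gammaMap {A : Type*} [AddCommMonoid A] {n m : ℕ}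
    (α : Fin (n + 1) → Fin (m + 1)) (x : Fin n → A) : Fin m → A :=
  fun i => ∑ j : Fin n, if α j.succ = i.succ then x j else 0

/-- The functor `A ↦ A^×` from commutative monoids to functors `Γ → Set` is fully
faithful: every monoid homomorphism `f : A → B` induces a natural transformation
`A^× → B^×` (applied componentwise), and conversely every natural family
`τ : A^× → B^×` (natural with respect to all based maps of finite pointed sets)
is induced by a unique monoid homomorphism. -/
theorem gammaFunctor_fully_faithful (A B : Type*) [AddCommMonoid A] [AddCommMonoid B] :
    (∀ (f : A →+ B) (n m : ℕ) (α : Fin (n + 1) → Fin (m + 1)), α 0 = 0 →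
      ∀ x : Fin n → A,
        gammaMap α (fun j => f (x j)) = fun i => f (gammaMap α x i)) ∧
    (∀ τ : ∀ n : ℕ, (Fin n → A) → (Fin n → B),
      (∀ (n m : ℕ) (α : Fin (n + 1) → Fin (m + 1)), α 0 = 0 →
        ∀ x : Fin n → A, τ m (gammaMap α x) = gammaMap α (τ n x)) →
      ∃! f : A →+ B, ∀ (n : ℕ) (x : Fin n → A) (i : Fin n), τ n x i = f (x i)) := by
  constructor
  · intro f n m α hα x
    funext i
    simp only [gammaMap, map_sum]
    congr 1; funext j
    split <;> simp
  · intro τ hτ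
    set f₀ : A → B := fun a => τ 1 (fun _ => a) 0 with hf₀
    -- projection computation: τ n x i = f₀ (x i)
    have key : ∀ (n : ℕ) (x : Fin n → A) (i : Fin n), τ n x i = f₀ (x i) := by
      intro n x i
      have h := hτ n 1 (fun j => if j = i.succ then 1 else 0)
        (by simp [(Fin.succ_ne_zero i).symm]) x
      have h1 : gammaMap (fun j : Fin (n + 1) => if j = i.succ then (1 : Fin 2) else 0) x
          = fun _ => x i := by
        funext k
        have : k = 0 := Subsingleton.elim _ _
        subst this
        simp only [gammaMap]
        have : ∀ j : Fin n,
            (if (if j.succ = i.succ then (1 : Fin 2) else 0) = (0 : Fin 1).succ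
              then x j else 0) = if j = i then x j else 0 := by
          intro j
          by_cases hj : j = i
          · simp [hj]
          · have : ¬ j.succ = i.succ := fun h => hj (Fin.succ_injective _ h)
            simp [this, hj]
        rw [Finset.sum_congr rfl fun j _ => this j]
        simp
      have h2 : gammaMap (fun j : Fin (n + 1) => if j = i.succ then (1 : Fin 2) else 0)
          (τ n x) 0 = τ n x i := by
        simp only [gammaMap]
        have : ∀ j : Fin n,
            (if (if j.succ = i.succ then (1 : Fin 2) else 0) = (0 : Fin 1).succ
              then τ n x j else 0) = if j = i then τ n x j else 0 := by
          intro j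
          by_cases hj : j = i
          · simp [hj]
          · have : ¬ j.succ = i.succ := fun h => hj (Fin.succ_injective _ h)
            simp [this, hj]
        rw [Finset.sum_congr rfl fun j _ => this j]
        simp
      rw [h1] at h
      rw [← h2, ← h, hf₀]
    have hzero : f₀ 0 = 0 := by
      have h := hτ 0 1 (fun _ => 0) rfl Fin.elim0
      have h1 : gammaMap (fun _ : Fin 1 => (0 : Fin 2)) (Fin.elim0 : Fin 0 → A)
          = fun _ => (0 : A) := by
        funext k; simp [gammaMap]
      have h2 : gammaMap (fun _ : Fin 1 => (0 : Fin 2)) (τ 0 Fin.elim0) 0 = 0 := by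
        simp [gammaMap]
      rw [h1] at h
      rw [hf₀]
      simp only
      rw [h, h2]
    have hadd : ∀ a b : A, f₀ (a + b) = f₀ a + f₀ b := by
      intro a b
      have h := hτ 2 1 (fun j : Fin 3 => if j = 0 then 0 else 1)
        (by simp) ![a, b]
      have h1 : gammaMap (fun j : Fin 3 => if j = 0 then (0 : Fin 2) else 1) ![a, b]
          = fun _ => a + b := by
        funext k
        have : k = 0 := Subsingleton.elim _ _
        subst this
        simp [gammaMap, Fin.sum_univ_two, Fin.succ_ne_zero]
      have h2 : gammaMap (fun j : Fin 3 => if j = 0 then (0 : Fin 2) else 1)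
          (τ 2 ![a, b]) 0 = τ 2 ![a, b] 0 + τ 2 ![a, b] 1 := by
        simp [gammaMap, Fin.sum_univ_two, Fin.succ_ne_zero]
      rw [h1] at h
      have := congrFun h 0
      rw [h2] at this
      rw [hf₀]
      simp only
      rw [this, key 2 ![a, b] 0, key 2 ![a, b] 1]
      simp [hf₀]
    refine ⟨⟨⟨f₀, hzero⟩, hadd⟩, fun n x i => key n x i, ?_⟩
    intro g hg
    ext a
    have := hg 1 (fun _ => a) 0
    rw [key 1 (fun _ => a) 0] at this
    exact this.symm
end

section
/- Let K and L be pointed sets and let a : Γ × Γ → Γ denote the wedge (coproduct) functor on finite pointed sets. Then the left Kan extension of the contravariant functor (𝐚,𝐛) ↦ Map(𝐚,K) × Map(𝐛,L) along a is naturally isomorphic to the contravariant functor 𝐜 ↦ Map(𝐜, K ∨ L). -/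
/-- Morphisms `𝐧 → 𝐦` in the category `Γ` of finite pointed sets
`𝐧 = {0,…,n}` with basepoint `0`. -/
def GHom (n m : ℕ) := {f : Fin (n + 1) → Fin (m + 1) // f 0 = 0}

/-- Composition in `Γ`. -/
def gcomp {c n m : ℕ} (γ : GHom c n) (δ : GHom n m) : GHom c m :=
  ⟨fun x => δ.1 (γ.1 x), by show δ.1 (γ.1 0) = 0; rw [γ.2, δ.2]⟩

/-- Based maps `𝐧 → X` into a pointed set `X`, i.e. the value at `𝐧` of the
contravariant functor `X^× : Γᵒᵖ → Set`, `𝐧 ↦ Map(𝐧, X)`. -/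
def BMap (n : ℕ) (X : Type) [Inhabited X] := {f : Fin (n + 1) → X // f 0 = default}

/-- Functoriality of `X^×`: precomposition of a based map with a `Γ`-morphism. -/
def pull {X : Type} [Inhabited X] {n m : ℕ} (α : GHom n m) (f : BMap m X) :
    BMap n X :=
  ⟨fun i => f.1 (α.1 i), by show f.1 (α.1 0) = default; rw [α.2, f.2]⟩

/-- The wedge functor `a : Γ × Γ → Γ` on morphisms, under the identification
`𝐚 ∨ 𝐛 ≅ 𝐚+𝐛` (first block `1,…,a`, second block `a+1,…,a+b`). -/
def wmap {a b a' b' : ℕ} (α : GHom a a') (β : GHom b b') : GHom (a + b) (a' + b') :=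
  ⟨fun y =>
    if y.1 = 0 then 0
    else if h2 : y.1 ≤ a then
      ⟨(α.1 ⟨y.1, by omega⟩).1, by have := (α.1 ⟨y.1, by omega⟩).isLt; omega⟩
    else
      (let w := β.1 ⟨y.1 - a, by have := y.isLt; omega⟩
       if w.1 = 0 then 0 else ⟨a' + w.1, by have := w.isLt; omega⟩), by simp⟩

/-- The relation identifying basepoints in `K ⊕ L`. -/
def WedgeRel (K L : Type) [Inhabited K] [Inhabited L] : K ⊕ L → K ⊕ L → Prop :=
  fun p q => (p = Sum.inl default ∨ p = Sum.inr default) ∧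
    (q = Sum.inl default ∨ q = Sum.inr default)

/-- The wedge of pointed sets. -/
def Wedge (K L : Type) [Inhabited K] [Inhabited L] := Quot (WedgeRel K L)

instance (K L : Type) [Inhabited K] [Inhabited L] : Inhabited (Wedge K L) :=
  ⟨Quot.mk _ (Sum.inl default)⟩

/-- The based map `𝐚+𝐛 ≅ 𝐚 ∨ 𝐛 → K ∨ L` induced by based maps `f : 𝐚 → K`,
`g : 𝐛 → L`. -/
def wval {K L : Type} [Inhabited K] [Inhabited L] {a b : ℕ}
    (f : BMap a K) (g : BMap b L) (y : Fin (a + b + 1)) : Wedge K L :=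
  if y.1 = 0 then Quot.mk _ (Sum.inl default)
  else if h2 : y.1 ≤ a then Quot.mk _ (Sum.inl (f.1 ⟨y.1, by omega⟩))
  else Quot.mk _ (Sum.inr (g.1 ⟨y.1 - a, by have := y.isLt; omega⟩))

/-- The canonical cocone: for `γ : 𝐜 → 𝐚+𝐛` in `Γ` and based maps `f : 𝐚 → K`,
`g : 𝐛 → L`, the based map `𝐜 → K ∨ L` obtained by composing `γ` with the wedge
of `f` and `g`. -/
def uw (K L : Type) [Inhabited K] [Inhabited L] (c a b : ℕ)
    (γ : GHom c (a + b)) (p : BMap a K × BMap b L) : BMap c (Wedge K L) :=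
  ⟨fun x => wval p.1 p.2 (γ.1 x), by simp [γ.2, wval]; rfl⟩

section LanWedgeAux
open Classical

variable {K L : Type} [Inhabited K] [Inhabited L]

/-- The basepoint class in `K ⊕ L`. -/
def IsBase (K L : Type) [Inhabited K] [Inhabited L] (p : K ⊕ L) : Prop :=
  p = Sum.inl default ∨ p = Sum.inr default

noncomputable def nwNorm : Wedge K L → K ⊕ L :=
  Quot.lift (fun p => if IsBase K L p then Sum.inl default else p)
    (fun p q h => by
      rw [if_pos (show IsBase K L p from h.1), if_pos (show IsBase K L q from h.2)])

lemma eq_or_base {p q : K ⊕ L}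
    (h : Quot.mk (WedgeRel K L) p = Quot.mk (WedgeRel K L) q) :
    p = q ∨ (IsBase K L p ∧ IsBase K L q) := by
  have hn : (if IsBase K L p then (Sum.inl default : K ⊕ L) else p)
      = (if IsBase K L q then Sum.inl default else q) := congrArg nwNorm h
  by_cases hp : IsBase K L p <;> by_cases hq : IsBase K L q
  · exact Or.inr ⟨hp, hq⟩
  · rw [if_pos hp, if_neg hq] at hn
    exact absurd (Or.inl hn.symm) hq
  · rw [if_neg hp, if_pos hq] at hn
    exact absurd (Or.inl hn) hp
  · rw [if_neg hp, if_neg hq] at hn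
    exact Or.inl hn

lemma mk_base {p : K ⊕ L} (hp : IsBase K L p) :
    Quot.mk (WedgeRel K L) p = Quot.mk (WedgeRel K L) (Sum.inl default) :=
  Quot.sound ⟨hp, Or.inl rfl⟩

lemma base_of_mk {p : K ⊕ L}
    (h : Quot.mk (WedgeRel K L) p = Quot.mk (WedgeRel K L) (Sum.inl (default : K))) :
    IsBase K L p := by
  rcases eq_or_base h with h | h
  · exact Or.inl h
  · exact h.1



variable {c : ℕ}

noncomputable def cF (H : Fin (c + 1) → K ⊕ L) (h0 : IsBase K L (H 0)) : BMap c K :=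
  ⟨fun x => Sum.elim id (fun _ => default) (H x), by
    rcases h0 with h | h <;> simp [h]⟩

noncomputable def cG (H : Fin (c + 1) → K ⊕ L) (h0 : IsBase K L (H 0)) : BMap c L :=
  ⟨fun x => Sum.elim (fun _ => default) id (H x), by
    rcases h0 with h | h <;> simp [h]⟩

noncomputable def cgam (H : Fin (c + 1) → K ⊕ L) : GHom c (c + c) :=
  ⟨fun x =>
    if x.1 = 0 then 0
    else Sum.elim (fun _ => (⟨x.1, by have := x.isLt; omega⟩ : Fin (c + c + 1)))
      (fun _ => ⟨c + x.1, by have := x.isLt; omega⟩) (H x), by simp⟩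

lemma recon (h : BMap c (Wedge K L)) (H : Fin (c + 1) → K ⊕ L)
    (hH : ∀ x, Quot.mk (WedgeRel K L) (H x) = h.1 x) (h0 : IsBase K L (H 0)) :
    uw K L c c c (cgam H) (cF H h0, cG H h0) = h := by
  apply Subtype.ext; funext x
  show wval (cF H h0) (cG H h0) ((cgam H).1 x) = h.1 x
  by_cases hx : x.1 = 0
  · have hx0 : x = 0 := Fin.ext (by simpa using hx)
    have h1 : (cgam H).1 x = 0 := by simp [-Fin.val_eq_zero_iff, cgam, hx]
    rw [h1, hx0, h.2]
    simp [wval]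
    rfl
  · cases hHx : H x with
    | inl k =>
      have h1 : (cgam H).1 x = ⟨x.1, by have := x.isLt; omega⟩ := by
        simp [-Fin.val_eq_zero_iff, cgam, hx, hHx]
      rw [h1]
      have h2 : x.1 ≤ c := by have := x.isLt; omega
      simp only [wval, ↓reduceIte, ↓reduceDIte, hx, if_false, h2, dif_pos]
      rw [← hH x, hHx]
      show Quot.mk _ (Sum.inl ((cF H h0).1 ⟨x.1, _⟩)) = _
      have : (⟨x.1, by have := x.isLt; omega⟩ : Fin (c + 1)) = x := rfl
      rw [this]
      show Quot.mk _ (Sum.inl (Sum.elim id (fun _ => default) (H x))) = _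
      rw [hHx]
      rfl
    | inr l =>
      have h1 : (cgam H).1 x = ⟨c + x.1, by have := x.isLt; omega⟩ := by
        simp [-Fin.val_eq_zero_iff, cgam, hx, hHx]
      rw [h1]
      have h2 : ¬ (c + x.1 = 0) := by omega
      have h3 : ¬ (c + x.1 ≤ c) := by omega
      simp only [wval, ↓reduceIte, ↓reduceDIte, h2, if_false, h3, dif_neg, not_false_iff]
      rw [← hH x, hHx]
      show Quot.mk _ (Sum.inr ((cG H h0).1 ⟨c + x.1 - c, _⟩)) = _
      have h4 : (⟨c + x.1 - c, by have := x.isLt; omega⟩ : Fin (c + 1)) = x :=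
        Fin.ext (by simp)
      rw [h4]
      show Quot.mk _ (Sum.inr (Sum.elim (fun _ => default) id (H x))) = _
      rw [hHx]
      rfl

lemma wval_comp {a b a' b' : ℕ} (α : GHom a a') (β : GHom b b')
    (f : BMap a' K) (g : BMap b' L) (y : Fin (a + b + 1)) :
    wval (pull α f) (pull β g) y = wval f g ((wmap α β).1 y) := by
  by_cases h0 : y.1 = 0
  · have h1 : (wmap α β).1 y = 0 := by simp [-Fin.val_eq_zero_iff, wmap, h0]
    rw [h1]
    simp [wval, h0]; rfl
  by_cases h2 : y.1 ≤ a
  · -- first block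
    set z := α.1 ⟨y.1, by omega⟩ with hz
    have h1 : (wmap α β).1 y = ⟨z.1, by have := z.isLt; omega⟩ := by
      simp [-Fin.val_eq_zero_iff, wmap, h0, h2]; rfl
    rw [h1]
    have hL : wval (pull α f) (pull β g) y = Quot.mk _ (Sum.inl (f.1 z)) := by
      simp only [wval, ↓reduceIte, ↓reduceDIte, h0, if_false, h2, dif_pos]
      rfl
    rw [hL]
    by_cases hzz : z.1 = 0
    · have hz0 : z = 0 := Fin.ext (by simpa using hzz)
      simp only [wval, ↓reduceIte, ↓reduceDIte, hzz, if_pos]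
      rw [hz0, f.2]
    · have hza : z.1 ≤ a' := by have := z.isLt; omega
      simp only [wval, ↓reduceIte, ↓reduceDIte, hzz, if_false, hza, dif_pos]; rfl
  · -- second block
    set w := β.1 ⟨y.1 - a, by have := y.isLt; omega⟩ with hw
    have hL : wval (pull α f) (pull β g) y = Quot.mk _ (Sum.inr (g.1 w)) := by
      simp only [wval, ↓reduceIte, ↓reduceDIte, h0, if_false, h2, dif_neg, not_false_iff]
      rfl
    rw [hL]
    by_cases hww : w.1 = 0
    · have hw0 : w = 0 := Fin.ext (by simpa using hww)
      have h1 : (wmap α β).1 y = 0 := by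
        simp [-Fin.val_eq_zero_iff, wmap, h0, h2, ← hw, hww]
      rw [h1]
      simp only [wval]
      rw [hw0, g.2]
      exact Quot.sound ⟨Or.inr rfl, Or.inl rfl⟩
    · have h1 : (wmap α β).1 y = ⟨a' + w.1, by have := w.isLt; omega⟩ := by
        simp [-Fin.val_eq_zero_iff, wmap, h0, h2, ← hw, hww]
      rw [h1]
      have hx0 : ¬ (a' + w.1 = 0) := by omega
      have hx2 : ¬ (a' + w.1 ≤ a') := by omega
      simp only [wval, ↓reduceIte, ↓reduceDIte, hx0, if_false, hx2, dif_neg, not_false_iff]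
      have : (⟨a' + w.1 - a', by have := w.isLt; omega⟩ : Fin (b' + 1)) = w :=
        Fin.ext (by simp)
      rw [this]

noncomputable def liftH {a b : ℕ} (γ : GHom c (a + b)) (f : BMap a K) (g : BMap b L) :
    Fin (c + 1) → K ⊕ L := fun x =>
  if (γ.1 x).1 = 0 then Sum.inl default
  else if h2 : (γ.1 x).1 ≤ a then Sum.inl (f.1 ⟨(γ.1 x).1, by omega⟩)
  else Sum.inr (g.1 ⟨(γ.1 x).1 - a, by have := (γ.1 x).isLt; omega⟩)

lemma gamma_zero {a b : ℕ} (γ : GHom c (a + b)) : (γ.1 0).1 = 0 := by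
  rw [γ.2]; simp

lemma liftH_mk {a b : ℕ} (γ : GHom c (a + b)) (f : BMap a K) (g : BMap b L) (x : Fin (c + 1)) :
    Quot.mk (WedgeRel K L) (liftH γ f g x) = (uw K L c a b γ (f, g)).1 x := by
  show _ = wval f g (γ.1 x)
  unfold liftH wval
  split_ifs <;> simp_all [↓reduceIte, ↓reduceDIte] <;> rfl

lemma liftH_base {a b : ℕ} (γ : GHom c (a + b)) (f : BMap a K) (g : BMap b L) :
    IsBase K L (liftH γ f g 0) := by
  left
  simp [liftH, gamma_zero γ]

noncomputable def alphaOf {a b : ℕ} (γ : GHom c (a + b)) : GHom c a :=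
  ⟨fun x => if h2 : (γ.1 x).1 ≤ a then ⟨(γ.1 x).1, by omega⟩ else 0, by
    dsimp only
    rw [dif_pos (by rw [gamma_zero γ]; omega)]
    apply Fin.ext
    simp [gamma_zero γ]⟩

noncomputable def betaOf {a b : ℕ} (γ : GHom c (a + b)) : GHom c b :=
  ⟨fun x => if h2 : (γ.1 x).1 ≤ a then 0
    else ⟨(γ.1 x).1 - a, by have := (γ.1 x).isLt; omega⟩, by
    dsimp only
    rw [dif_pos (by rw [gamma_zero γ]; omega)]⟩

lemma pull_alpha {a b : ℕ} (γ : GHom c (a + b)) (f : BMap a K) (g : BMap b L) :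
    pull (alphaOf γ) f = cF (liftH γ f g) (liftH_base γ f g) := by
  apply Subtype.ext; funext x
  show f.1 ((alphaOf γ).1 x) = Sum.elim id (fun _ => default) (liftH γ f g x)
  by_cases h0 : (γ.1 x).1 = 0
  · have hle : (γ.1 x).1 ≤ a := by omega
    simp only [alphaOf, liftH, h0, if_pos, hle, dif_pos]
    rw [dif_pos (Nat.zero_le a), Fin.mk_zero, f.2]
    rfl
  by_cases h2 : (γ.1 x).1 ≤ a
  · simp only [alphaOf, liftH, h0, if_false, h2, dif_pos]
    rfl
  · simp only [alphaOf, liftH, h0, if_false, h2, dif_neg, not_false_iff]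
    rw [f.2]
    rfl

lemma pull_beta {a b : ℕ} (γ : GHom c (a + b)) (f : BMap a K) (g : BMap b L) :
    pull (betaOf γ) g = cG (liftH γ f g) (liftH_base γ f g) := by
  apply Subtype.ext; funext x
  show g.1 ((betaOf γ).1 x) = Sum.elim (fun _ => default) id (liftH γ f g x)
  by_cases h0 : (γ.1 x).1 = 0
  · have hle : (γ.1 x).1 ≤ a := by omega
    simp only [betaOf, liftH, h0, if_pos, hle, dif_pos]
    rw [dif_pos (Nat.zero_le a), g.2]
    rfl
  by_cases h2 : (γ.1 x).1 ≤ a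
  · simp only [betaOf, liftH, h0, if_false, h2, dif_pos]
    rw [g.2]
    rfl
  · simp only [betaOf, liftH, h0, if_false, h2, dif_neg, not_false_iff]
    rfl

lemma gcomp_recover {a b : ℕ} (γ : GHom c (a + b)) (f : BMap a K) (g : BMap b L) :
    gcomp (cgam (liftH γ f g)) (wmap (alphaOf γ) (betaOf γ)) = γ := by
  apply Subtype.ext; funext x
  show (wmap (alphaOf γ) (betaOf γ)).1 ((cgam (liftH γ f g)).1 x) = γ.1 x
  by_cases hx : x.1 = 0
  · have hx0 : x = 0 := Fin.ext (by simpa using hx)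
    have h1 : (cgam (liftH γ f g)).1 x = 0 := by simp [-Fin.val_eq_zero_iff, cgam, hx]
    rw [h1, (wmap (alphaOf γ) (betaOf γ)).2, hx0, γ.2]
  by_cases h0 : (γ.1 x).1 = 0
  · have hle : (γ.1 x).1 ≤ a := by omega
    have hH : liftH γ f g x = Sum.inl default := by simp [liftH, h0]
    have h1 : (cgam (liftH γ f g)).1 x = ⟨x.1, by have := x.isLt; omega⟩ := by
      simp [-Fin.val_eq_zero_iff, cgam, hx, hH]
    rw [h1]
    have hxc : x.1 ≤ c := by have := x.isLt; omega
    simp only [wmap, hx, if_false, hxc, dif_pos]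
    have hax : (alphaOf γ).1 ⟨x.1, by have := x.isLt; omega⟩ = ⟨(γ.1 x).1, by omega⟩ := by
      show (alphaOf γ).1 x = _
      simp [alphaOf, hle]
    apply Fin.ext
    have hv := congrArg Fin.val hax
    simp only [Fin.val_mk] at hv ⊢
    rw [hv, h0]
  by_cases h2 : (γ.1 x).1 ≤ a
  · have hH : liftH γ f g x = Sum.inl (f.1 ⟨(γ.1 x).1, by omega⟩) := by
      simp [liftH, h0, h2]
    have h1 : (cgam (liftH γ f g)).1 x = ⟨x.1, by have := x.isLt; omega⟩ := by
      simp [-Fin.val_eq_zero_iff, cgam, hx, hH]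
    rw [h1]
    have hxc : x.1 ≤ c := by have := x.isLt; omega
    simp only [wmap, hx, if_false, hxc, dif_pos]
    have hax : (alphaOf γ).1 ⟨x.1, by have := x.isLt; omega⟩ = ⟨(γ.1 x).1, by omega⟩ := by
      show (alphaOf γ).1 x = _
      simp [alphaOf, h2]
    apply Fin.ext
    have hv := congrArg Fin.val hax
    simp only [Fin.val_mk] at hv ⊢
    rw [hv]
  · have hH : liftH γ f g x = Sum.inr (g.1 ⟨(γ.1 x).1 - a, by have := (γ.1 x).isLt; omega⟩) := by
      simp [liftH, h0, h2]
    have h1 : (cgam (liftH γ f g)).1 x = ⟨c + x.1, by have := x.isLt; omega⟩ := by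
      simp [-Fin.val_eq_zero_iff, cgam, hx, hH]
    rw [h1]
    have hc0 : ¬ (c + x.1 = 0) := by omega
    have hcc : ¬ (c + x.1 ≤ c) := by omega
    simp only [wmap, hc0, if_false, hcc, dif_neg, not_false_iff]
    have hidx : (⟨c + x.1 - c, by have := x.isLt; omega⟩ : Fin (c + 1)) = x :=
      Fin.ext (by simp)
    have hb : ((betaOf γ).1 ⟨c + x.1 - c, by have := x.isLt; omega⟩).1 = (γ.1 x).1 - a := by
      rw [hidx]
      simp [betaOf, h2]
    have hb0 : ¬ ((betaOf γ).1 ⟨c + x.1 - c, by have := x.isLt; omega⟩).1 = 0 := by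
      rw [hb]; omega
    rw [if_neg hb0]
    apply Fin.ext
    simp only [Fin.val_mk]
    rw [hb]
    omega

lemma reduce {a b : ℕ} (Z : Type) (v : ∀ a b : ℕ, GHom c (a + b) → BMap a K × BMap b L → Z)
    (hv : ∀ (a b a' b' : ℕ) (α : GHom a a') (β : GHom b b') (γ : GHom c (a + b))
        (f : BMap a' K) (g : BMap b' L),
        v a b γ (pull α f, pull β g) = v a' b' (gcomp γ (wmap α β)) (f, g))
    (γ : GHom c (a + b)) (f : BMap a K) (g : BMap b L) :
    v a b γ (f, g)
      = v c c (cgam (liftH γ f g)) (cF (liftH γ f g) (liftH_base γ f g),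
          cG (liftH γ f g) (liftH_base γ f g)) := by
  rw [← pull_alpha γ f g, ← pull_beta γ f g]
  rw [hv c c a b (alphaOf γ) (betaOf γ) (cgam (liftH γ f g)) f g]
  rw [gcomp_recover γ f g]

/-- Collapse the degenerate (basepoint) positions of `h` to `0`. -/
noncomputable def coll (h : BMap c (Wedge K L)) : GHom c c :=
  ⟨fun x => if h.1 x = Quot.mk (WedgeRel K L) (Sum.inl default) then 0 else x, by
    dsimp only
    split <;> rfl⟩

lemma cF_base_default (h : BMap c (Wedge K L)) (H : Fin (c + 1) → K ⊕ L)
    (hH : ∀ x, Quot.mk (WedgeRel K L) (H x) = h.1 x) (h0 : IsBase K L (H 0))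
    {x : Fin (c + 1)} (hb : h.1 x = Quot.mk (WedgeRel K L) (Sum.inl default)) :
    (cF H h0).1 x = default := by
  have : IsBase K L (H x) := base_of_mk ((hH x).trans hb)
  show Sum.elim id (fun _ => default) (H x) = default
  rcases this with h1 | h1 <;> simp [h1]

lemma cG_base_default (h : BMap c (Wedge K L)) (H : Fin (c + 1) → K ⊕ L)
    (hH : ∀ x, Quot.mk (WedgeRel K L) (H x) = h.1 x) (h0 : IsBase K L (H 0))
    {x : Fin (c + 1)} (hb : h.1 x = Quot.mk (WedgeRel K L) (Sum.inl default)) :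
    (cG H h0).1 x = default := by
  have : IsBase K L (H x) := base_of_mk ((hH x).trans hb)
  show Sum.elim (fun _ => default) id (H x) = default
  rcases this with h1 | h1 <;> simp [h1]

lemma pull_coll_cF (h : BMap c (Wedge K L)) (H : Fin (c + 1) → K ⊕ L)
    (hH : ∀ x, Quot.mk (WedgeRel K L) (H x) = h.1 x) (h0 : IsBase K L (H 0)) :
    pull (coll h) (cF H h0) = cF H h0 := by
  apply Subtype.ext; funext x
  show (cF H h0).1 ((coll h).1 x) = (cF H h0).1 x
  by_cases hb : h.1 x = Quot.mk (WedgeRel K L) (Sum.inl default)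
  · have h1 : (coll h).1 x = 0 := if_pos hb
    rw [h1, (cF H h0).2, cF_base_default h H hH h0 hb]
  · have h1 : (coll h).1 x = x := by simp [coll, hb]
    rw [h1]

lemma pull_coll_cG (h : BMap c (Wedge K L)) (H : Fin (c + 1) → K ⊕ L)
    (hH : ∀ x, Quot.mk (WedgeRel K L) (H x) = h.1 x) (h0 : IsBase K L (H 0)) :
    pull (coll h) (cG H h0) = cG H h0 := by
  apply Subtype.ext; funext x
  show (cG H h0).1 ((coll h).1 x) = (cG H h0).1 x
  by_cases hb : h.1 x = Quot.mk (WedgeRel K L) (Sum.inl default)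
  · have h1 : (coll h).1 x = 0 := if_pos hb
    rw [h1, (cG H h0).2, cG_base_default h H hH h0 hb]
  · have h1 : (coll h).1 x = x := by simp [coll, hb]
    rw [h1]

lemma wmap_coll_cgam (h : BMap c (Wedge K L)) (H : Fin (c + 1) → K ⊕ L)
    (_hH : ∀ x, Quot.mk (WedgeRel K L) (H x) = h.1 x) (x : Fin (c + 1)) :
    (wmap (coll h) (coll h)).1 ((cgam H).1 x)
      = if x.1 = 0 then 0
        else if h.1 x = Quot.mk (WedgeRel K L) (Sum.inl default) then 0
        else (cgam H).1 x := by
  by_cases hx : x.1 = 0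
  · have h1 : (cgam H).1 x = 0 := by simp [-Fin.val_eq_zero_iff, cgam, hx]
    rw [h1, (wmap (coll h) (coll h)).2, if_pos hx]
  rw [if_neg hx]
  have hxc : x.1 ≤ c := by have := x.isLt; omega
  by_cases hb : h.1 x = Quot.mk (WedgeRel K L) (Sum.inl default)
  · rw [if_pos hb]
    have hcx : (coll h).1 x = 0 := if_pos hb
    cases hHx : H x with
    | inl k =>
      have h1 : (cgam H).1 x = ⟨x.1, by have := x.isLt; omega⟩ := by
        simp [-Fin.val_eq_zero_iff, cgam, hx, hHx]
      rw [h1]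
      simp only [wmap, hx, if_false, hxc, dif_pos]
      apply Fin.ext
      have hv := congrArg Fin.val hcx
      simp only [Fin.val_mk]
      rw [hv]
      simp
    | inr l =>
      have h1 : (cgam H).1 x = ⟨c + x.1, by have := x.isLt; omega⟩ := by
        simp [-Fin.val_eq_zero_iff, cgam, hx, hHx]
      rw [h1]
      have hc0 : ¬ (c + x.1 = 0) := by omega
      have hcc : ¬ (c + x.1 ≤ c) := by omega
      simp only [wmap, hc0, if_false, hcc, dif_neg, not_false_iff]
      have hidx : (⟨c + x.1 - c, by have := x.isLt; omega⟩ : Fin (c + 1)) = x :=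
        Fin.ext (by simp)
      have hb2 : ((coll h).1 ⟨c + x.1 - c, by have := x.isLt; omega⟩).1 = 0 := by
        rw [hidx, hcx]
        simp
      rw [if_pos hb2]
  · rw [if_neg hb]
    have hcx : (coll h).1 x = x := by simp [coll, hb]
    cases hHx : H x with
    | inl k =>
      have h1 : (cgam H).1 x = ⟨x.1, by have := x.isLt; omega⟩ := by
        simp [-Fin.val_eq_zero_iff, cgam, hx, hHx]
      rw [h1]
      simp only [wmap, hx, if_false, hxc, dif_pos]
      apply Fin.ext
      have hv := congrArg Fin.val hcx
      simp only [Fin.val_mk]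
      rw [hv]
    | inr l =>
      have h1 : (cgam H).1 x = ⟨c + x.1, by have := x.isLt; omega⟩ := by
        simp [-Fin.val_eq_zero_iff, cgam, hx, hHx]
      rw [h1]
      have hc0 : ¬ (c + x.1 = 0) := by omega
      have hcc : ¬ (c + x.1 ≤ c) := by omega
      simp only [wmap, hc0, if_false, hcc, dif_neg, not_false_iff]
      have hidx : (⟨c + x.1 - c, by have := x.isLt; omega⟩ : Fin (c + 1)) = x :=
        Fin.ext (by simp)
      have hb2 : ((coll h).1 ⟨c + x.1 - c, by have := x.isLt; omega⟩).1 = x.1 := by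
        rw [hidx, hcx]
      have hb3 : ¬ ((coll h).1 ⟨c + x.1 - c, by have := x.isLt; omega⟩).1 = 0 := by
        rw [hb2]; exact hx
      rw [if_neg hb3]
      apply Fin.ext
      simp only [Fin.val_mk]
      rw [hb2]

lemma lift_indep (Z : Type) (v : ∀ a b : ℕ, GHom c (a + b) → BMap a K × BMap b L → Z)
    (hv : ∀ (a b a' b' : ℕ) (α : GHom a a') (β : GHom b b') (γ : GHom c (a + b))
        (f : BMap a' K) (g : BMap b' L),
        v a b γ (pull α f, pull β g) = v a' b' (gcomp γ (wmap α β)) (f, g))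
    (h : BMap c (Wedge K L)) (H₁ H₂ : Fin (c + 1) → K ⊕ L)
    (hH₁ : ∀ x, Quot.mk (WedgeRel K L) (H₁ x) = h.1 x) (h01 : IsBase K L (H₁ 0))
    (hH₂ : ∀ x, Quot.mk (WedgeRel K L) (H₂ x) = h.1 x) (h02 : IsBase K L (H₂ 0)) :
    v c c (cgam H₁) (cF H₁ h01, cG H₁ h01) = v c c (cgam H₂) (cF H₂ h02, cG H₂ h02) := by
  have hkey : ∀ (x : Fin (c + 1)), ¬ h.1 x = Quot.mk (WedgeRel K L) (Sum.inl default) →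
      H₁ x = H₂ x := by
    intro x hb
    rcases eq_or_base ((hH₁ x).trans (hH₂ x).symm) with he | hbb
    · exact he
    · exact absurd ((hH₁ x).symm.trans (mk_base hbb.1)) hb
  have hf : cF H₁ h01 = cF H₂ h02 := by
    apply Subtype.ext; funext x
    by_cases hb : h.1 x = Quot.mk (WedgeRel K L) (Sum.inl default)
    · rw [cF_base_default h H₁ hH₁ h01 hb, cF_base_default h H₂ hH₂ h02 hb]
    · show Sum.elim id (fun _ => default) (H₁ x) = Sum.elim id (fun _ => default) (H₂ x)
      rw [hkey x hb]
  have hg : cG H₁ h01 = cG H₂ h02 := by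
    apply Subtype.ext; funext x
    by_cases hb : h.1 x = Quot.mk (WedgeRel K L) (Sum.inl default)
    · rw [cG_base_default h H₁ hH₁ h01 hb, cG_base_default h H₂ hH₂ h02 hb]
    · show Sum.elim (fun _ => default) id (H₁ x) = Sum.elim (fun _ => default) id (H₂ x)
      rw [hkey x hb]
  have hγ : gcomp (cgam H₁) (wmap (coll h) (coll h))
      = gcomp (cgam H₂) (wmap (coll h) (coll h)) := by
    apply Subtype.ext; funext x
    show (wmap (coll h) (coll h)).1 ((cgam H₁).1 x) = (wmap (coll h) (coll h)).1 ((cgam H₂).1 x)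
    rw [wmap_coll_cgam h H₁ hH₁ x, wmap_coll_cgam h H₂ hH₂ x]
    by_cases hx : x.1 = 0
    · rw [if_pos hx, if_pos hx]
    by_cases hb : h.1 x = Quot.mk (WedgeRel K L) (Sum.inl default)
    · rw [if_neg hx, if_neg hx, if_pos hb, if_pos hb]
    · rw [if_neg hx, if_neg hx, if_neg hb, if_neg hb]
      simp only [cgam]
      rw [hkey x hb]
  calc v c c (cgam H₁) (cF H₁ h01, cG H₁ h01)
      = v c c (cgam H₁) (pull (coll h) (cF H₁ h01), pull (coll h) (cG H₁ h01)) := by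
        rw [pull_coll_cF h H₁ hH₁ h01, pull_coll_cG h H₁ hH₁ h01]
    _ = v c c (gcomp (cgam H₁) (wmap (coll h) (coll h))) (cF H₁ h01, cG H₁ h01) :=
        hv c c c c (coll h) (coll h) (cgam H₁) (cF H₁ h01) (cG H₁ h01)
    _ = v c c (gcomp (cgam H₂) (wmap (coll h) (coll h))) (cF H₂ h02, cG H₂ h02) := by
        rw [hγ, hf, hg]
    _ = v c c (cgam H₂) (pull (coll h) (cF H₂ h02), pull (coll h) (cG H₂ h02)) :=
        (hv c c c c (coll h) (coll h) (cgam H₂) (cF H₂ h02) (cG H₂ h02)).symm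
    _ = v c c (cgam H₂) (cF H₂ h02, cG H₂ h02) := by
        rw [pull_coll_cF h H₂ hH₂ h02, pull_coll_cG h H₂ hH₂ h02]

noncomputable def canonH (h : BMap c (Wedge K L)) : Fin (c + 1) → K ⊕ L :=
  fun x => Quot.out (h.1 x)

lemma canonH_mk (h : BMap c (Wedge K L)) (x : Fin (c + 1)) :
    Quot.mk (WedgeRel K L) (canonH h x) = h.1 x :=
  Quot.out_eq _

lemma canonH_base (h : BMap c (Wedge K L)) : IsBase K L (canonH h 0) :=
  base_of_mk ((canonH_mk h 0).trans h.2)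

end LanWedgeAux

/-- The paper's Lemma `a_*(K^× × L^×) = (K ∨ L)^×`, in pointwise form: the left
Kan extension along the wedge functor `a : Γ × Γ → Γ` (as a Kan extension of
contravariant `Set`-valued functors, computed at `𝐜` as the colimit over the comma
category `(𝐜 ↓ a)`) of `(𝐚,𝐛) ↦ Map(𝐚,K) × Map(𝐛,L)` is naturally isomorphic to
`𝐜 ↦ Map(𝐜, K ∨ L)`: the canonical family `uw` is a cocone on the comma category,
and it is universal among such cocones. -/
theorem lan_wedge (K L : Type) [Inhabited K] [Inhabited L] (c : ℕ) :
    (∀ (a b a' b' : ℕ) (α : GHom a a') (β : GHom b b') (γ : GHom c (a + b))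
        (f : BMap a' K) (g : BMap b' L),
        uw K L c a b γ (pull α f, pull β g) =
          uw K L c a' b' (gcomp γ (wmap α β)) (f, g)) ∧
    (∀ (Z : Type) (v : ∀ a b : ℕ, GHom c (a + b) → BMap a K × BMap b L → Z),
      (∀ (a b a' b' : ℕ) (α : GHom a a') (β : GHom b b') (γ : GHom c (a + b))
          (f : BMap a' K) (g : BMap b' L),
          v a b γ (pull α f, pull β g) = v a' b' (gcomp γ (wmap α β)) (f, g)) →
      ∃! w : BMap c (Wedge K L) → Z,
        ∀ (a b : ℕ) (γ : GHom c (a + b)) (p : BMap a K × BMap b L),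
          v a b γ p = w (uw K L c a b γ p)) := by
  constructor
  · intro a b a' b' α β γ f g
    apply Subtype.ext; funext x
    show wval (pull α f) (pull β g) (γ.1 x) = wval f g ((wmap α β).1 (γ.1 x))
    exact wval_comp α β f g (γ.1 x)
  · intro Z v hv
    refine ⟨fun h => v c c (cgam (canonH h)) (cF (canonH h) (canonH_base h),
      cG (canonH h) (canonH_base h)), ?_, ?_⟩
    · intro a b γ p
      obtain ⟨f, g⟩ := p
      have h1 := reduce Z v hv γ f g
      rw [h1]
      exact lift_indep Z v hv (uw K L c a b γ (f, g)) (liftH γ f g) (canonH _)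
        (liftH_mk γ f g) (liftH_base γ f g) (canonH_mk _) (canonH_base _)
    · intro w' hw'
      funext h
      have hr := recon h (canonH h) (canonH_mk h) (canonH_base h)
      calc w' h
          = w' (uw K L c c c (cgam (canonH h))
              (cF (canonH h) (canonH_base h), cG (canonH h) (canonH_base h))) := by rw [hr]
        _ = v c c (cgam (canonH h))
              (cF (canonH h) (canonH_base h), cG (canonH h) (canonH_base h)) :=
            (hw' c c (cgam (canonH h)) _).symm
end
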